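/- Suppose 0 ≤ σ < 1 and fix T > 0. Then ∫_{(0,∞)^p} (1 − e^{−α ψ(2Tw₁,…,2Tw_p)}) ρ(dw) → ∞ as α → ∞. Consequently the expected number of nodes E[V_{α,T}] = α ∫ (1 − e^{−α ψ(2Tw)}) ρ(dw) satisfies E[V_{α,T}] = ω(α) as α → ∞, i.e. α / E[V_{α,T}] → 0. -/

import Mathlib

open MeasureTheory Real Filter
open scoped ENNReal NNReal

/-- The Lévy measure of a generalized gamma process: the measure on `(0,∞)` with density
`w ↦ w^(-1-σ) * exp(-τ*w) / Γ(1-σ)` with respect to Lebesgue measure. -/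
noncomputable def rho0 (σ τ : ℝ) : Measure ℝ :=
  ((volume : Measure ℝ).restrict (Set.Ioi 0)).withDensity
    (fun w => ENNReal.ofReal (w ^ (-1 - σ) * Real.exp (-τ * w) / Real.Gamma (1 - σ)))

/-- The Gamma(a,b) probability measure on `(0,∞)`, with density
`x ↦ b^a x^(a−1) e^(−b x) / Γ(a)` with respect to Lebesgue measure. -/
noncomputable def gammaM (a b : ℝ) : Measure ℝ :=
  ((volume : Measure ℝ).restrict (Set.Ioi 0)).withDensity
    (fun x => ENNReal.ofReal (b ^ a * x ^ (a - 1) * Real.exp (-b * x) / Real.Gamma a))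

/-- The multivariate Lévy measure `ρ` of the compound CRM with independent gamma scores:
the pushforward of `ρ₀ ⊗ Gamma(a₁,b₁) ⊗ ⋯ ⊗ Gamma(a_p,b_p)` under
`(w₀, β₁, …, β_p) ↦ (w₀β₁, …, w₀β_p)`. -/
noncomputable def rhoC (σ τ : ℝ) (p : ℕ) (a b : Fin p → ℝ) : Measure (Fin p → ℝ) :=
  Measure.map (fun x : ℝ × (Fin p → ℝ) => fun k => x.1 * x.2 k)
    ((rho0 σ τ).prod (Measure.pi fun k => gammaM (a k) (b k)))

/-- The Laplace exponent `ψ(t) = ∫ (1 − e^{−Σ_k t_k v_k}) ρ(dv)` of the compound CRM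
(a finite quantity, expressed here as a Bochner integral). -/
noncomputable def psi (σ τ : ℝ) (p : ℕ) (a b : Fin p → ℝ) (t : Fin p → ℝ) : ℝ :=
  ∫ v, (1 - Real.exp (-∑ k, t k * v k)) ∂(rhoC σ τ p a b)

/-- `∫ (1 − e^{−α ψ(2Tw₁,…,2Tw_p)}) ρ(dw)`, so that `E[V_{α,T}]` equals `α` times this. -/
noncomputable def nodesIntegral (σ τ : ℝ) (p : ℕ) (a b : Fin p → ℝ) (α T : ℝ) : ℝ :=
  ∫ w, (1 - Real.exp (-α * psi σ τ p a b (fun k => 2 * T * w k))) ∂(rhoC σ τ p a b)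

/- ### Auxiliary lemmas -/

lemma aux_integrableOn_rpow_exp {s r : ℝ} (hs : 0 < s) (hr : 0 < r) :
    IntegrableOn (fun x : ℝ => x ^ (s - 1) * Real.exp (-(r * x))) (Set.Ioi 0) := by
  have h := integrableOn_rpow_mul_exp_neg_mul_rpow (s := s - 1) (p := 1) (b := r)
    (by linarith) one_pos hr
  refine h.congr_fun (fun x hx => ?_) measurableSet_Ioi
  dsimp only
  rw [Real.rpow_one, neg_mul]

lemma aux_integrable_withDensity {d : ℝ → ℝ} (hd : Measurable d)
    (hd0 : ∀ x ∈ Set.Ioi (0:ℝ), 0 ≤ d x) {g : ℝ → ℝ}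
    (h : IntegrableOn (fun x => g x * d x) (Set.Ioi 0)) :
    Integrable g ((volume.restrict (Set.Ioi 0)).withDensity fun x => ENNReal.ofReal (d x)) := by
  rw [integrable_withDensity_iff (by fun_prop) (ae_of_all _ fun x => ENNReal.ofReal_lt_top)]
  refine h.congr ?_
  filter_upwards [ae_restrict_mem measurableSet_Ioi] with x hx
  rw [ENNReal.toReal_ofReal (hd0 x hx)]

lemma gammaM_univ {a b : ℝ} (ha : 0 < a) (hb : 0 < b) : gammaM a b Set.univ = 1 := by
  have hΓ : 0 < Real.Gamma a := Real.Gamma_pos_of_pos ha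
  have hc : (0:ℝ) ≤ b ^ a / Real.Gamma a := div_nonneg (Real.rpow_nonneg hb.le a) hΓ.le
  rw [gammaM, withDensity_apply _ MeasurableSet.univ, Measure.restrict_univ]
  have h1 : ∀ x ∈ Set.Ioi (0:ℝ),
      ENNReal.ofReal (b ^ a * x ^ (a - 1) * Real.exp (-b * x) / Real.Gamma a)
      = ENNReal.ofReal (b ^ a / Real.Gamma a)
        * ENNReal.ofReal (x ^ (a - 1) * Real.exp (-(b * x))) := by
    intro x hx
    rw [← ENNReal.ofReal_mul hc]
    congr 1
    rw [neg_mul]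
    ring
  rw [setLIntegral_congr_fun measurableSet_Ioi h1,
      lintegral_const_mul' _ _ ENNReal.ofReal_ne_top,
      ← ofReal_integral_eq_lintegral_ofReal (aux_integrableOn_rpow_exp ha hb) ?_,
      integral_rpow_mul_exp_neg_mul_Ioi ha hb, ← ENNReal.ofReal_mul hc]
  · rw [show b ^ a / Real.Gamma a * ((1/b) ^ a * Real.Gamma a)
        = b ^ a * (1/b) ^ a * (Real.Gamma a / Real.Gamma a) from by ring,
      ← Real.mul_rpow hb.le (by positivity), mul_one_div_cancel hb.ne',
      Real.one_rpow, div_self hΓ.ne', one_mul, ENNReal.ofReal_one]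
  · filter_upwards [ae_restrict_mem measurableSet_Ioi] with x hx
    have hx' : (0:ℝ) < x := hx
    positivity

lemma gammaM_isProb {a b : ℝ} (ha : 0 < a) (hb : 0 < b) :
    IsProbabilityMeasure (gammaM a b) := ⟨gammaM_univ ha hb⟩

lemma gammaM_integrable_id {a b : ℝ} (ha : 0 < a) (hb : 0 < b) :
    Integrable (fun x => x) (gammaM a b) := by
  have hΓ : 0 < Real.Gamma a := Real.Gamma_pos_of_pos ha
  rw [gammaM]
  refine aux_integrable_withDensity (by fun_prop) (fun x hx => ?_) ?_
  · have hx' : (0:ℝ) < x := hx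
    exact div_nonneg (mul_nonneg (mul_nonneg (Real.rpow_nonneg hb.le _)
      (Real.rpow_nonneg hx'.le _)) (Real.exp_pos _).le) hΓ.le
  · have h : IntegrableOn
        (fun x : ℝ => b ^ a / Real.Gamma a * (x ^ (a + 1 - 1) * Real.exp (-(b * x))))
        (Set.Ioi 0) :=
      (aux_integrableOn_rpow_exp (s := a + 1) (by linarith) hb).const_mul (b ^ a / Real.Gamma a)
    refine h.congr_fun (fun x hx => ?_) measurableSet_Ioi
    have hx' : (0:ℝ) < x := hx
    dsimp only
    rw [show a + 1 - 1 = (a - 1) + 1 by ring, Real.rpow_add hx', Real.rpow_one, neg_mul]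
    ring

lemma rho0_integrable_id {σ τ : ℝ} (hσ : σ < 1) (hτ : 0 < τ) :
    Integrable (fun x => x) (rho0 σ τ) := by
  have hΓ : 0 < Real.Gamma (1 - σ) := Real.Gamma_pos_of_pos (by linarith)
  rw [rho0]
  refine aux_integrable_withDensity (by fun_prop) (fun x hx => ?_) ?_
  · have hx' : (0:ℝ) < x := hx
    exact div_nonneg (mul_nonneg (Real.rpow_nonneg hx'.le _) (Real.exp_pos _).le) hΓ.le
  · have h : IntegrableOn
        (fun x : ℝ => 1 / Real.Gamma (1 - σ) * (x ^ (1 - σ - 1) * Real.exp (-(τ * x))))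
        (Set.Ioi 0) :=
      (aux_integrableOn_rpow_exp (s := 1 - σ) (by linarith) hτ).const_mul (1 / Real.Gamma (1 - σ))
    refine h.congr_fun (fun x hx => ?_) measurableSet_Ioi
    have hx' : (0:ℝ) < x := hx
    dsimp only
    rw [show (1 - σ) - 1 = (-1 - σ) + 1 by ring, Real.rpow_add hx', Real.rpow_one, neg_mul]
    ring

lemma rho0_univ {σ τ : ℝ} (hσ0 : 0 ≤ σ) (hσ : σ < 1) (hτ : 0 < τ) :
    rho0 σ τ Set.univ = ⊤ := by
  have hΓ : 0 < Real.Gamma (1 - σ) := Real.Gamma_pos_of_pos (by linarith)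
  by_contra h
  have hfin : rho0 σ τ Set.univ < ⊤ := lt_top_iff_ne_top.mpr h
  rw [rho0, withDensity_apply _ MeasurableSet.univ, Measure.restrict_univ] at hfin
  set d : ℝ → ℝ := fun w => w ^ (-1 - σ) * Real.exp (-τ * w) / Real.Gamma (1 - σ) with hd
  have hd_meas : Measurable d := by fun_prop
  have hd_nonneg : ∀ᵐ x ∂(volume.restrict (Set.Ioi 0)), 0 ≤ d x := by
    filter_upwards [ae_restrict_mem measurableSet_Ioi] with x hx
    have hx' : (0:ℝ) < x := hx
    exact div_nonneg (mul_nonneg (Real.rpow_nonneg hx'.le _) (Real.exp_pos _).le) hΓ.le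
  have hdint : IntegrableOn d (Set.Ioi 0) := by
    refine ⟨hd_meas.aestronglyMeasurable, ?_⟩
    rw [hasFiniteIntegral_iff_ofReal hd_nonneg]
    exact hfin
  have hdint' : IntegrableOn d (Set.Ioo 0 1) := hdint.mono_set Set.Ioo_subset_Ioi_self
  have hcmp : IntegrableOn (fun x : ℝ => x ^ (-1 - σ)) (Set.Ioo 0 1) := by
    have hg : IntegrableOn (fun x => Real.Gamma (1 - σ) * Real.exp τ * d x) (Set.Ioo 0 1) :=
      hdint'.const_mul _
    refine Integrable.mono' hg (by fun_prop) ?_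
    filter_upwards [ae_restrict_mem measurableSet_Ioo] with x hx
    have hx0 : (0:ℝ) < x := hx.1
    have hx1 : x < 1 := hx.2
    have h2 : (1:ℝ) ≤ Real.exp (τ + -τ * x) := by
      rw [← Real.exp_zero]
      exact Real.exp_le_exp.mpr (by nlinarith)
    rw [Real.norm_eq_abs, abs_of_nonneg (Real.rpow_nonneg hx0.le _)]
    calc x ^ (-1 - σ) = x ^ (-1 - σ) * 1 := (mul_one _).symm
      _ ≤ x ^ (-1 - σ) * Real.exp (τ + -τ * x) :=
        mul_le_mul_of_nonneg_left h2 (Real.rpow_nonneg hx0.le _)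
      _ = Real.Gamma (1 - σ) * Real.exp τ * d x := by
        rw [hd, Real.exp_add]
        field_simp
  have := (intervalIntegral.integrableOn_Ioo_rpow_iff one_pos).mp hcmp
  linarith

lemma phi_measurable (p : ℕ) :
    Measurable (fun x : ℝ × (Fin p → ℝ) => fun k => x.1 * x.2 k) :=
  measurable_pi_lambda _ fun k => measurable_fst.mul ((measurable_pi_apply k).comp measurable_snd)

lemma pi_map_eval {p : ℕ} (μ : Fin p → Measure ℝ) [∀ i, IsProbabilityMeasure (μ i)] (k : Fin p) :
    (Measure.pi μ).map (fun β => β k) = μ k := by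
  ext s hs
  rw [Measure.map_apply (measurable_pi_apply k) hs]
  have hpre : (fun β : Fin p → ℝ => β k) ⁻¹' s
      = Set.pi Set.univ (Function.update (fun _ : Fin p => (Set.univ : Set ℝ)) k s) := by
    ext x
    simp only [Set.mem_preimage, Set.mem_pi, Set.mem_univ, forall_true_left]
    constructor
    · intro hx i
      rcases eq_or_ne i k with rfl | h
      · simpa using hx
      · simp [Function.update_of_ne h]
    · intro hx
      simpa using hx k
  rw [hpre, Measure.pi_pi]
  rw [Finset.prod_eq_single k (fun i _ hik => by simp [Function.update_of_ne hik])
      (fun h => absurd (Finset.mem_univ k) h)]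
  simp

/-- For `0 ≤ σ < 1` and fixed `T > 0`,
`∫ (1 − e^{−α ψ(2Tw)}) ρ(dw) → ∞` as `α → ∞`; consequently
`E[V_{α,T}] = α ∫ (1 − e^{−α ψ(2Tw)}) ρ(dw) = ω(α)`, i.e. `α / E[V_{α,T}] → 0`. -/
theorem nodes_sparse_regime (σ τ : ℝ) (hσ0 : 0 ≤ σ) (hσ : σ < 1) (hτ : 0 < τ) (p : ℕ)
    (hp : 1 ≤ p) (a b : Fin p → ℝ) (ha : ∀ k, 0 < a k) (hb : ∀ k, 0 < b k)
    (T : ℝ) (hT : 0 < T) :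
    Tendsto (fun α : ℝ => nodesIntegral σ τ p a b α T) atTop atTop ∧
    Tendsto (fun α : ℝ => α / (α * nodesIntegral σ τ p a b α T)) atTop (nhds 0) := by
  haveI : ∀ k, IsProbabilityMeasure (gammaM (a k) (b k)) := fun k => gammaM_isProb (ha k) (hb k)
  haveI : Nonempty (Fin p) := ⟨⟨0, hp⟩⟩
  set φ : ℝ × (Fin p → ℝ) → (Fin p → ℝ) := fun x => fun k => x.1 * x.2 k with hφdef
  have hφ : Measurable φ := phi_measurable p
  set base : Measure (ℝ × (Fin p → ℝ)) :=
    (rho0 σ τ).prod (Measure.pi fun k => gammaM (a k) (b k)) with hbase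
  have hρ : rhoC σ τ p a b = base.map φ := rfl
  -- a.e. positivity
  have hae0 : ∀ᵐ x ∂(rho0 σ τ), 0 < x := by
    have h1 : ∀ᵐ x ∂(volume.restrict (Set.Ioi (0:ℝ))), 0 < x := ae_restrict_mem measurableSet_Ioi
    exact h1.filter_mono (withDensity_absolutelyContinuous _ _).ae_le
  have haeg : ∀ k, ∀ᵐ x ∂(gammaM (a k) (b k)), 0 < x := by
    intro k
    have h1 : ∀ᵐ x ∂(volume.restrict (Set.Ioi (0:ℝ))), 0 < x := ae_restrict_mem measurableSet_Ioi
    exact h1.filter_mono (withDensity_absolutelyContinuous _ _).ae_le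
  have haeπ : ∀ᵐ β ∂(Measure.pi fun k => gammaM (a k) (b k)), ∀ k, 0 < β k := by
    rw [ae_all_iff]
    intro k
    rw [ae_iff]
    exact Measure.pi_eval_preimage_null (μ := fun k => gammaM (a k) (b k)) (i := k)
      (s := {x : ℝ | ¬ 0 < x}) (ae_iff.mp (haeg k))
  have haebase : ∀ᵐ x ∂base, 0 < x.1 ∧ ∀ k, 0 < x.2 k := by
    rw [ae_iff]
    have hsub : {x : ℝ × (Fin p → ℝ) | ¬ (0 < x.1 ∧ ∀ k, 0 < x.2 k)} ⊆
        ({w : ℝ | ¬ 0 < w} ×ˢ Set.univ) ∪ (Set.univ ×ˢ {β : Fin p → ℝ | ¬ ∀ k, 0 < β k}) := by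
      intro x hx
      by_cases h1 : 0 < x.1
      · exact Or.inr ⟨trivial, fun h2 => hx ⟨h1, h2⟩⟩
      · exact Or.inl ⟨h1, trivial⟩
    refine measure_mono_null hsub (measure_union_null ?_ ?_)
    · rw [hbase, Measure.prod_prod, ae_iff.mp hae0, zero_mul]
    · rw [hbase, Measure.prod_prod, ae_iff.mp haeπ, mul_zero]
  have haeρ : ∀ᵐ v ∂(rhoC σ τ p a b), ∀ k, 0 < v k := by
    rw [hρ, ae_map_iff hφ.aemeasurable]
    · exact haebase.mono fun x hx k => mul_pos hx.1 (hx.2 k)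
    · rw [Set.setOf_forall]
      exact MeasurableSet.iInter fun k => measurable_pi_apply k measurableSet_Ioi
  -- total mass is infinite
  have hρtop : rhoC σ τ p a b Set.univ = ⊤ := by
    rw [hρ, Measure.map_apply hφ MeasurableSet.univ, Set.preimage_univ, hbase,
      ← Set.univ_prod_univ, Measure.prod_prod, rho0_univ hσ0 hσ hτ, measure_univ, mul_one]
  -- coordinates are integrable
  have hcoord : ∀ k, Integrable (fun v : Fin p → ℝ => v k) (rhoC σ τ p a b) := by
    intro k
    rw [hρ, integrable_map_measure (measurable_pi_apply k).aestronglyMeasurable hφ.aemeasurable]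
    have h2 : Integrable (fun β : Fin p → ℝ => β k) (Measure.pi fun k => gammaM (a k) (b k)) := by
      have h3 : Integrable (id : ℝ → ℝ)
          ((Measure.pi fun k => gammaM (a k) (b k)).map (fun β => β k)) := by
        rw [pi_map_eval (fun k => gammaM (a k) (b k)) k]
        exact gammaM_integrable_id (ha k) (hb k)
      have h4 := (integrable_map_measure (f := fun β : Fin p → ℝ => β k) (g := (id : ℝ → ℝ))
        measurable_id.aestronglyMeasurable (measurable_pi_apply k).aemeasurable).mp h3
      simpa [Function.comp] using h4
    have h4 : Integrable (fun z : ℝ × (Fin p → ℝ) => z.1 * z.2 k) base :=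
      (rho0_integrable_id hσ hτ).mul_prod h2
    simpa [Function.comp_def, hφdef] using h4
  -- ψ machinery
  have hg_meas : ∀ t : Fin p → ℝ, AEStronglyMeasurable
      (fun v : Fin p → ℝ => 1 - Real.exp (-∑ k, t k * v k)) (rhoC σ τ p a b) := by
    intro t
    exact (Continuous.aestronglyMeasurable (by fun_prop))
  have hsum_int : ∀ t : Fin p → ℝ,
      Integrable (fun v : Fin p → ℝ => ∑ k, t k * v k) (rhoC σ τ p a b) :=
    fun t => integrable_finset_sum _ fun k _ => (hcoord k).const_mul (t k)
  have hg_int : ∀ t : Fin p → ℝ, (∀ k, 0 ≤ t k) →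
      Integrable (fun v : Fin p → ℝ => 1 - Real.exp (-∑ k, t k * v k)) (rhoC σ τ p a b) := by
    intro t ht
    refine Integrable.mono (hsum_int t) (hg_meas t) ?_
    filter_upwards [haeρ] with v hv
    have hs : 0 ≤ ∑ k, t k * v k := Finset.sum_nonneg fun k _ => mul_nonneg (ht k) (hv k).le
    have h1 : Real.exp (-∑ k, t k * v k) ≤ 1 := by
      rw [← Real.exp_zero]
      exact Real.exp_le_exp.mpr (by linarith)
    have h2 := Real.add_one_le_exp (-∑ k, t k * v k)
    rw [Real.norm_eq_abs, Real.norm_eq_abs, abs_of_nonneg (by linarith), abs_of_nonneg hs]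
    linarith
  set C : Fin p → ℝ := fun k => ∫ v, v k ∂(rhoC σ τ p a b) with hC
  have hpsi_le : ∀ t : Fin p → ℝ, (∀ k, 0 ≤ t k) →
      psi σ τ p a b t ≤ ∑ k, t k * C k := by
    intro t ht
    have h1 : psi σ τ p a b t ≤ ∫ v, ∑ k, t k * v k ∂(rhoC σ τ p a b) := by
      rw [psi]
      refine integral_mono_ae (hg_int t ht) (hsum_int t) ?_
      filter_upwards [haeρ] with v hv
      have h2 := Real.add_one_le_exp (-∑ k, t k * v k)
      show 1 - Real.exp (-∑ k, t k * v k) ≤ ∑ k, t k * v k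
      linarith
    refine h1.trans ?_
    rw [integral_finset_sum _ (fun k _ => (hcoord k).const_mul (t k))]
    exact le_of_eq (Finset.sum_congr rfl fun k _ => integral_const_mul (t k) _)
  have hpsi_pos : ∀ t : Fin p → ℝ, (∀ k, 0 < t k) → 0 < psi σ τ p a b t := by
    intro t ht
    have hnn : 0 ≤ᵐ[rhoC σ τ p a b] fun v : Fin p → ℝ => 1 - Real.exp (-∑ k, t k * v k) := by
      filter_upwards [haeρ] with v hv
      have hs : 0 ≤ ∑ k, t k * v k := Finset.sum_nonneg fun k _ => mul_nonneg (ht k).le (hv k).le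
      have h1 : Real.exp (-∑ k, t k * v k) ≤ 1 := by
        rw [← Real.exp_zero]
        exact Real.exp_le_exp.mpr (by linarith)
      simp only [Pi.zero_apply]
      linarith
    rw [psi, integral_pos_iff_support_of_nonneg_ae hnn (hg_int t fun k => (ht k).le)]
    have hsup : ∀ᵐ v ∂(rhoC σ τ p a b),
        v ∈ Function.support (fun v : Fin p → ℝ => 1 - Real.exp (-∑ k, t k * v k)) := by
      filter_upwards [haeρ] with v hv
      have hs : 0 < ∑ k, t k * v k :=
        Finset.sum_pos (fun k _ => mul_pos (ht k) (hv k)) Finset.univ_nonempty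
      have h1 : Real.exp (-∑ k, t k * v k) < 1 := by
        rw [← Real.exp_zero]
        exact Real.exp_lt_exp.mpr (by linarith)
      have h9 : (0:ℝ) < 1 - Real.exp (-∑ k, t k * v k) := by linarith
      exact ne_of_gt h9
    have hcnull : rhoC σ τ p a b
        (Function.support (fun v : Fin p → ℝ => 1 - Real.exp (-∑ k, t k * v k)))ᶜ = 0 :=
      ae_iff.mp hsup
    rcases eq_or_ne (rhoC σ τ p a b
        (Function.support (fun v : Fin p → ℝ => 1 - Real.exp (-∑ k, t k * v k)))) 0 with h0 | h0
    · exfalso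
      have h5 := measure_union_le (μ := rhoC σ τ p a b)
        (Function.support (fun v : Fin p → ℝ => 1 - Real.exp (-∑ k, t k * v k)))
        (Function.support (fun v : Fin p → ℝ => 1 - Real.exp (-∑ k, t k * v k)))ᶜ
      rw [Set.union_compl_self, h0, hcnull, hρtop] at h5
      simp at h5
    · exact pos_iff_ne_zero.mpr h0
  -- measurability of Ψ
  set Ψ : (Fin p → ℝ) → ℝ := fun w => psi σ τ p a b fun k => 2 * T * w k with hΨ
  have hΨw : ∀ w, psi σ τ p a b (fun k => 2 * T * w k) = Ψ w := fun w => rfl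
  have hΨm : Measurable Ψ := by
    haveI : SFinite (rho0 σ τ) := by unfold rho0; infer_instance
    haveI : SFinite base := by rw [hbase]; infer_instance
    have hG : StronglyMeasurable (fun q : (Fin p → ℝ) × (ℝ × (Fin p → ℝ)) =>
        1 - Real.exp (-∑ k, (2 * T * q.1 k) * (q.2.1 * q.2.2 k))) :=
      (Continuous.stronglyMeasurable (by fun_prop))
    have h1 := hG.integral_prod_right' (ν := base)
    have heq : Ψ = fun w => ∫ x,
        (1 - Real.exp (-∑ k, (2 * T * w k) * (x.1 * x.2 k))) ∂base := by
      funext w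
      rw [hΨ]
      simp only [psi, hρ]
      rw [integral_map hφ.aemeasurable (by rw [← hρ]; exact hg_meas (fun k => 2 * T * w k))]
    rw [heq]
    exact h1.measurable
  -- integrand facts
  have hfmeas : ∀ α : ℝ, AEStronglyMeasurable
      (fun w : Fin p → ℝ => 1 - Real.exp (-α * Ψ w)) (rhoC σ τ p a b) :=
    fun α => (measurable_const.sub ((hΨm.const_mul (-α)).exp)).aestronglyMeasurable
  have hD : Integrable (fun w : Fin p → ℝ => ∑ k, (2 * T * C k) * w k) (rhoC σ τ p a b) :=
    integrable_finset_sum _ fun k _ => (hcoord k).const_mul _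
  have hΨfacts : ∀ᵐ w ∂(rhoC σ τ p a b), 0 < Ψ w ∧ Ψ w ≤ ∑ k, (2 * T * C k) * w k := by
    filter_upwards [haeρ] with w hw
    constructor
    · exact hpsi_pos _ fun k => mul_pos (by linarith) (hw k)
    · have h1 := hpsi_le (fun k => 2 * T * w k) (fun k => (mul_pos (by linarith) (hw k)).le)
      rw [hΨw] at h1
      refine h1.trans (le_of_eq ?_)
      exact Finset.sum_congr rfl fun k _ => by ring
  have hfnn : ∀ α : ℝ, 0 ≤ α → (0 : (Fin p → ℝ) → ℝ) ≤ᵐ[rhoC σ τ p a b]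
      fun w => 1 - Real.exp (-α * Ψ w) := by
    intro α hα
    filter_upwards [hΨfacts] with w hw
    have h1 : Real.exp (-α * Ψ w) ≤ 1 := by
      rw [← Real.exp_zero]
      exact Real.exp_le_exp.mpr (by nlinarith [hw.1.le])
    simp only [Pi.zero_apply]
    linarith
  have hfint : ∀ α : ℝ, 0 ≤ α →
      Integrable (fun w : Fin p → ℝ => 1 - Real.exp (-α * Ψ w)) (rhoC σ τ p a b) := by
    intro α hα
    refine Integrable.mono (hD.const_mul α) (hfmeas α) ?_
    filter_upwards [hΨfacts] with w hw
    have h0 : 0 ≤ Ψ w := hw.1.le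
    have h2 := Real.add_one_le_exp (-(α * Ψ w))
    have h3 : Real.exp (-α * Ψ w) ≤ 1 := by
      rw [← Real.exp_zero]
      exact Real.exp_le_exp.mpr (by nlinarith)
    have h4 : α * Ψ w ≤ α * ∑ k, 2 * T * C k * w k := mul_le_mul_of_nonneg_left hw.2 hα
    rw [Real.norm_eq_abs, Real.norm_eq_abs, abs_of_nonneg (by linarith),
      neg_mul] at *
    rw [abs_of_nonneg (by nlinarith)]
    linarith
  -- monotonicity
  have hmono : ∀ α₁ α₂ : ℝ, 0 ≤ α₁ → α₁ ≤ α₂ →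
      nodesIntegral σ τ p a b α₁ T ≤ nodesIntegral σ τ p a b α₂ T := by
    intro α₁ α₂ h1 h12
    simp only [nodesIntegral, hΨw]
    refine integral_mono_ae (hfint α₁ h1) (hfint α₂ (h1.trans h12)) ?_
    filter_upwards [hΨfacts] with w hw
    have h3 : Real.exp (-α₂ * Ψ w) ≤ Real.exp (-α₁ * Ψ w) :=
      Real.exp_le_exp.mpr (by nlinarith [hw.1.le])
    show 1 - Real.exp (-α₁ * Ψ w) ≤ 1 - Real.exp (-α₂ * Ψ w)
    linarith
  -- part 1
  have key : Tendsto (fun α : ℝ => nodesIntegral σ τ p a b α T) atTop atTop := by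
    rw [tendsto_atTop]
    intro M
    set M' := max M 0 with hM'
    have hFn : Tendsto
        (fun n : ℕ => ∫⁻ w, ENNReal.ofReal (1 - Real.exp (-(n:ℝ) * Ψ w)) ∂(rhoC σ τ p a b))
        atTop (nhds ⊤) := by
      have h1 : ∫⁻ _, (1:ℝ≥0∞) ∂(rhoC σ τ p a b) = ⊤ := by
        rw [lintegral_one, hρtop]
      rw [← h1]
      refine lintegral_tendsto_of_tendsto_of_monotone ?_ ?_ ?_
      · exact fun n => (ENNReal.measurable_ofReal.comp
          (measurable_const.sub ((hΨm.const_mul (-(n:ℝ))).exp))).aemeasurable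
      · filter_upwards [hΨfacts] with w hw
        intro m n hmn
        apply ENNReal.ofReal_le_ofReal
        have h2 : Real.exp (-(n:ℝ) * Ψ w) ≤ Real.exp (-(m:ℝ) * Ψ w) := by
          refine Real.exp_le_exp.mpr ?_
          have : (m:ℝ) ≤ (n:ℝ) := Nat.cast_le.mpr hmn
          nlinarith [hw.1.le]
        linarith
      · filter_upwards [hΨfacts] with w hw
        have h2 : Tendsto (fun n : ℕ => -(n:ℝ) * Ψ w) atTop atBot := by
          have h3 : Tendsto (fun n : ℕ => (n:ℝ) * (-Ψ w)) atTop atBot :=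
            Tendsto.atTop_mul_const_of_neg (neg_lt_zero.mpr hw.1) tendsto_natCast_atTop_atTop
          refine h3.congr fun n => by ring
        have h4 : Tendsto (fun n : ℕ => Real.exp (-(n:ℝ) * Ψ w)) atTop (nhds 0) :=
          Real.tendsto_exp_atBot.comp h2
        have h5 : Tendsto (fun n : ℕ => 1 - Real.exp (-(n:ℝ) * Ψ w)) atTop (nhds 1) := by
          simpa using tendsto_const_nhds.sub h4
        have h6 := (ENNReal.continuous_ofReal.tendsto 1).comp h5
        simpa [Function.comp_def] using h6
    obtain ⟨n, hn⟩ := (hFn.eventually (eventually_gt_nhds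
      (show ENNReal.ofReal M' < ⊤ from ENNReal.ofReal_lt_top))).exists
    have hIntn := hfint (n:ℝ) (Nat.cast_nonneg n)
    have hEq : nodesIntegral σ τ p a b (n:ℝ) T
        = (∫⁻ w, ENNReal.ofReal (1 - Real.exp (-(n:ℝ) * Ψ w)) ∂(rhoC σ τ p a b)).toReal := by
      simp only [nodesIntegral, hΨw]
      exact integral_eq_lintegral_of_nonneg_ae (hfnn (n:ℝ) (Nat.cast_nonneg n))
        hIntn.aestronglyMeasurable
    have hne : (∫⁻ w, ENNReal.ofReal (1 - Real.exp (-(n:ℝ) * Ψ w)) ∂(rhoC σ τ p a b)) ≠ ⊤ := by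
      refine (lt_of_le_of_lt (lintegral_mono fun w => ?_) hIntn.2).ne
      exact Real.ofReal_le_enorm _
    have hM'lt : M' < nodesIntegral σ τ p a b (n:ℝ) T := by
      rw [hEq]
      have := (ENNReal.toReal_lt_toReal ENNReal.ofReal_ne_top hne).mpr hn
      rwa [ENNReal.toReal_ofReal (le_max_right M 0)] at this
    filter_upwards [eventually_ge_atTop ((n:ℝ))] with α hα
    have h7 := hmono (n:ℝ) α (Nat.cast_nonneg n) hα
    have h8 : M ≤ M' := le_max_left M 0
    linarith
  refine ⟨key, ?_⟩
  -- part 2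
  have h1 : Tendsto (fun α : ℝ => (nodesIntegral σ τ p a b α T)⁻¹) atTop (nhds 0) :=
    key.inv_tendsto_atTop
  refine Tendsto.congr' ?_ h1
  filter_upwards [key.eventually_ge_atTop 1, eventually_ge_atTop (1:ℝ)] with α hI hα
  have hα0 : (0:ℝ) < α := by linarith
  have hI0 : (0:ℝ) < nodesIntegral σ τ p a b α T := by linarith
  rw [← div_div, div_self hα0.ne', one_div]
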